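/- arXiv:2406.04798 — 4 statements merged into one kernel-verified Lean document; each statement's English description precedes it below -/
import Mathlib

section
/- Fix real numbers t̂, ẑ, â, b̂ with e := â t̂ + b̂ − ẑ ≠ 0 (the non-incidence condition). For t ≠ t̂ define z(t) = â t + b̂ and a(t) = (z(t) − ẑ)/(t − t̂). Then along this curve: z''(t) = 0, z'(t) − a(t) = −e/(t − t̂) ≠ 0, and a''(t) = −2 (a'(t))² / (z'(t) − a(t)). That is, the Lewy curve of the flat para-CR 3-manifold determined by the non-incident pair ((t̂, ẑ), (â, b̂)) solves the ODE pair z'' = 0, a'' = −2(a')²/(z' − a). -/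
/-- The Lewy curve of the flat para-CR 3-manifold determined by the non-incident
pair `((t̂, ẑ), (â, b̂))`: `z t = â t + b̂`. Here `ah = â`, `bh = b̂`. -/
def zCurve (ah bh : ℝ) : ℝ → ℝ := fun s => ah * s + bh

/-- The second component `a t = (z t − ẑ)/(t − t̂)` of the Lewy curve. -/
noncomputable def aCurve (th zh ah bh : ℝ) : ℝ → ℝ := fun s => (zCurve ah bh s - zh) / (s - th)

lemma zCurve_deriv (ah bh : ℝ) : deriv (zCurve ah bh) = fun _ => ah := by
  funext s
  have : HasDerivAt (zCurve ah bh) ah s := by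
    exact (((hasDerivAt_id s).const_mul ah).add_const bh).congr_deriv (mul_one ah)
  exact this.deriv

lemma aCurve_hasDerivAt (th zh ah bh : ℝ) {s : ℝ} (hs : s ≠ th) :
    HasDerivAt (aCurve th zh ah bh) (-(ah * th + bh - zh) / (s - th) ^ 2) s := by
  have hne : s - th ≠ 0 := sub_ne_zero.mpr hs
  have h1 : HasDerivAt (fun x : ℝ => x - th) 1 s := (hasDerivAt_id s).sub_const th
  have h2 : HasDerivAt (fun x : ℝ => (x - th)⁻¹) (-1 / (s - th) ^ 2) s := h1.inv hne
  have h3 : HasDerivAt (fun x : ℝ => ah + (ah * th + bh - zh) * (x - th)⁻¹)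
      ((ah * th + bh - zh) * (-1 / (s - th) ^ 2)) s := (h2.const_mul _).const_add ah
  have heq : aCurve th zh ah bh =ᶠ[nhds s]
      fun x : ℝ => ah + (ah * th + bh - zh) * (x - th)⁻¹ := by
    filter_upwards [eventually_ne_nhds hs] with x hx
    have hx' : x - th ≠ 0 := sub_ne_zero.mpr hx
    simp only [aCurve, zCurve]
    field_simp
    ring
  have h4 := h3.congr_of_eventuallyEq heq
  exact h4.congr_deriv (by ring)

lemma alg_key (e d : ℝ) (he : e ≠ 0) (hd : d ≠ 0) :
    -e * (-(2 * d) / (d ^ 2) ^ 2) = -2 * (-e / d ^ 2) ^ 2 / (-e / d) := by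
  field_simp

lemma aCurve_deriv_eq (th zh ah bh : ℝ) {s : ℝ} (hs : s ≠ th) :
    deriv (aCurve th zh ah bh) s = -(ah * th + bh - zh) / (s - th) ^ 2 :=
  (aCurve_hasDerivAt th zh ah bh hs).deriv

/-- The Lewy curve of the flat para-CR 3-manifold determined by a non-incident pair
solves the ODE pair `z'' = 0`, `a'' = −2(a')²/(z' − a)`; moreover
`z'(t) − a(t) = −e/(t − t̂) ≠ 0` where `e = â t̂ + b̂ − ẑ ≠ 0`. -/
theorem stmt4 (th zh ah bh : ℝ) (he : ah * th + bh - zh ≠ 0) :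
    ∀ t : ℝ, t ≠ th →
      deriv (deriv (zCurve ah bh)) t = 0 ∧
      deriv (zCurve ah bh) t - aCurve th zh ah bh t = -(ah * th + bh - zh) / (t - th) ∧
      deriv (zCurve ah bh) t - aCurve th zh ah bh t ≠ 0 ∧
      deriv (deriv (aCurve th zh ah bh)) t =
        -2 * (deriv (aCurve th zh ah bh) t) ^ 2 /
          (deriv (zCurve ah bh) t - aCurve th zh ah bh t) := by
  intro t ht
  have hne : t - th ≠ 0 := sub_ne_zero.mpr ht
  set e := ah * th + bh - zh with hedef
  have hz : deriv (zCurve ah bh) = fun _ => ah := zCurve_deriv ah bh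
  have hdiff : deriv (zCurve ah bh) t - aCurve th zh ah bh t = -e / (t - th) := by
    rw [hz]
    simp only [aCurve, zCurve]
    field_simp
    ring
  refine ⟨by rw [hz]; simp, hdiff, ?_, ?_⟩
  · rw [hdiff]
    exact div_ne_zero (neg_ne_zero.mpr he) hne
  · -- second derivative of aCurve
    have heq : deriv (aCurve th zh ah bh) =ᶠ[nhds t]
        fun x : ℝ => -e * ((x - th) ^ 2)⁻¹ := by
      filter_upwards [eventually_ne_nhds ht] with x hx
      rw [aCurve_deriv_eq th zh ah bh hx]
      ring
    have h1 : HasDerivAt (fun x : ℝ => x - th) 1 t := (hasDerivAt_id t).sub_const th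
    have hsq : HasDerivAt (fun x : ℝ => (x - th) ^ 2) (2 * (t - th)) t := by
      simpa using h1.fun_pow 2
    have hsqne : (t - th) ^ 2 ≠ 0 := pow_ne_zero 2 hne
    have hinv : HasDerivAt (fun x : ℝ => ((x - th) ^ 2)⁻¹)
        (-(2 * (t - th)) / ((t - th) ^ 2) ^ 2) t := hsq.inv hsqne
    have h2 : HasDerivAt (fun x : ℝ => -e * ((x - th) ^ 2)⁻¹)
        (-e * (-(2 * (t - th)) / ((t - th) ^ 2) ^ 2)) t := hinv.const_mul _
    have h3 := h2.congr_of_eventuallyEq heq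
    rw [h3.deriv, aCurve_deriv_eq th zh ah bh ht, hdiff]
    exact alg_key e (t - th) he hne
end

section
/- Let t, a : I → ℝⁿ be twice differentiable vector-valued functions on an interval I and let Z ∈ ℝⁿ be a constant vector. Suppose t'' = 0, and that for all s ∈ I: a'(s) = Z·(1 − a'(s)·t(s) − a(s)·t'(s)) (a vector equation, with the scalar 1 − a'·t − a·t' multiplying Z) and a''(s) = −Z·(a''(s)·t(s) + 2 a'(s)·t'(s)). If additionally 1 − a'(s)·t(s) − a(s)·t'(s) ≠ 0, then (1 − a(s)·t'(s)) a''(s) = −2 (a'(s)·t'(s)) a'(s) for all s ∈ I. In particular, any curve defined implicitly by a = Z(z − a·t) + T with t = Az + B affine (A, B, Z, T constant vectors) satisfies the ODE system t'' = 0, a'' = (−2 a'·t' / (1 − a·t')) a'. -/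
open scoped RealInnerProductSpace

/-- For vector-valued curves `t, a : I → ℝⁿ` with `t'' = 0`,
`a' = (1 − a'·t − a·t') Z` and `a'' = −(a''·t + 2 a'·t') Z`, with
`1 − a'·t − a·t' ≠ 0`, one has `(1 − a·t') a'' = −2 (a'·t') a'`
(the ODE system for Lewy curves of the flat para-CR structure). -/
theorem stmt6 (n : ℕ) (I : Set ℝ) (hI : IsOpen I)
    (t a : ℝ → EuclideanSpace ℝ (Fin n)) (Z : EuclideanSpace ℝ (Fin n))
    (htt : ∀ s ∈ I, deriv (deriv t) s = 0)
    (h1 : ∀ s ∈ I, deriv a s =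
      (1 - ⟪deriv a s, t s⟫ - ⟪a s, deriv t s⟫) • Z)
    (h2 : ∀ s ∈ I, deriv (deriv a) s =
      -(⟪deriv (deriv a) s, t s⟫ + 2 * ⟪deriv a s, deriv t s⟫) • Z)
    (hne : ∀ s ∈ I, 1 - ⟪deriv a s, t s⟫ - ⟪a s, deriv t s⟫ ≠ 0) :
    ∀ s ∈ I, (1 - ⟪a s, deriv t s⟫) • deriv (deriv a) s =
      (-2 * ⟪deriv a s, deriv t s⟫) • deriv a s := by
  intro s hs
  set α : ℝ := 1 - ⟪deriv a s, t s⟫ - ⟪a s, deriv t s⟫ with hα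
  set β : ℝ := ⟪deriv (deriv a) s, t s⟫ + 2 * ⟪deriv a s, deriv t s⟫ with hβ
  have ha' : deriv a s = α • Z := h1 s hs
  have ha'' : deriv (deriv a) s = -β • Z := h2 s hs
  have e1 : ⟪deriv a s, t s⟫ = α * ⟪Z, t s⟫ := by
    rw [ha', real_inner_smul_left]
  have e2 : ⟪deriv (deriv a) s, t s⟫ = -β * ⟪Z, t s⟫ := by
    rw [ha'', real_inner_smul_left]
  -- β(1 + ⟪Z,t⟫) = 2 a'·t'
  have e3 : β * (1 + ⟪Z, t s⟫) = 2 * ⟪deriv a s, deriv t s⟫ := by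
    have := hβ
    nlinarith [e2]
  have e4 : 1 - ⟪a s, deriv t s⟫ = α * (1 + ⟪Z, t s⟫) := by
    have := hα
    nlinarith [e1]
  rw [ha', ha'', e4, smul_smul, smul_smul]
  have e5 : (⟪α • Z, deriv t s⟫ : ℝ) = α * ⟪Z, deriv t s⟫ :=
    real_inner_smul_left _ _ _
  have e6 : β * (1 + ⟪Z, t s⟫) = 2 * (α * ⟪Z, deriv t s⟫) := by
    rw [e3, ha', e5]
  congr 1
  rw [e5]
  linear_combination (-α) * e6
end

section
/- Consider the system of two second-order ODEs with independent variable z and dependent variables (y¹, y²) = (t, a): (y¹)'' = F¹ = 0 and (y²)'' = F² = −2 p¹ (p²)² / (1 − y² p¹), where pⁱ = (yⁱ)'. Define the total derivative vector field X = ∂_z + p¹∂_{y¹} + p²∂_{y²} + F²∂_{p²}, and the matrix F^i_j = −∂F^i/∂y^j + (1/2) X(∂F^i/∂p^j) − (1/4) (∂F^i/∂p^k)(∂F^k/∂p^j) (sum over k). Then F^i_j = 0 identically (on the open set 1 − y²p¹ ≠ 0); in particular the generalized Wilczyński (Fels) torsion T^i_j = F^i_j − (1/2)δ^i_j F^k_k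 of this path geometry vanishes. -/
/-- The right-hand sides of the ODE system `(y¹)'' = 0`,
`(y²)'' = −2 p¹ (p²)²/(1 − y² p¹)`, on phase space with coordinates
`s = (z, y¹, y², p¹, p²)` (indices `0,…,4`). -/
noncomputable def Fsys : Fin 2 → (Fin 5 → ℝ) → ℝ :=
  ![fun _ => 0, fun s => -2 * s 3 * (s 4) ^ 2 / (1 - s 2 * s 3)]

/-- The total derivative vector field `X = ∂_z + p¹∂_{y¹} + p²∂_{y²} + F²∂_{p²}`
acting on a function. -/
noncomputable def Xtot (g : (Fin 5 → ℝ) → ℝ) (s : Fin 5 → ℝ) : ℝ :=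
  fderiv ℝ g s ![1, s 3, s 4, 0, Fsys 1 s]

/-- Indices of the `y` coordinates. -/
def eY : Fin 2 → Fin 5 := ![1, 2]

/-- Indices of the `p` coordinates. -/
def eP : Fin 2 → Fin 5 := ![3, 4]

/-- `F^i_j = −∂F^i/∂y^j + (1/2) X(∂F^i/∂p^j) − (1/4)(∂F^i/∂p^k)(∂F^k/∂p^j)`. -/
noncomputable def Fmat (i j : Fin 2) (s : Fin 5 → ℝ) : ℝ :=
  -(fderiv ℝ (Fsys i) s (Pi.single (eY j) 1))
    + (1 / 2) * Xtot (fun u => fderiv ℝ (Fsys i) u (Pi.single (eP j) 1)) s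
    - (1 / 4) * ∑ k : Fin 2,
        (fderiv ℝ (Fsys i) s (Pi.single (eP k) 1)) *
          (fderiv ℝ (Fsys k) s (Pi.single (eP j) 1))

/-! Auxiliary derivative computations. -/

noncomputable def pr (i : Fin 5) : (Fin 5 → ℝ) →L[ℝ] ℝ := ContinuousLinearMap.proj i

lemma fdF0 (s v : Fin 5 → ℝ) : fderiv ℝ (Fsys 0) s v = 0 := by
  have h0 : Fsys 0 = fun _ : Fin 5 → ℝ => (0 : ℝ) := rfl
  rw [h0, fderiv_fun_const]
  simp

lemma fdF2 (s : Fin 5 → ℝ) (h : 1 - s 2 * s 3 ≠ 0) (v : Fin 5 → ℝ) :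
    fderiv ℝ (Fsys 1) s v =
      (-2 * (s 3)^2 * (s 4)^2 * v 2 - 2 * (s 4)^2 * v 3) / (1 - s 2 * s 3)^2
        + (-4 * s 3 * s 4 * v 4) / (1 - s 2 * s 3) := by
  have p2 : HasFDerivAt (fun u : Fin 5 → ℝ => u 2) (pr 2) s := (pr 2).hasFDerivAt
  have p3 : HasFDerivAt (fun u : Fin 5 → ℝ => u 3) (pr 3) s := (pr 3).hasFDerivAt
  have p4 : HasFDerivAt (fun u : Fin 5 → ℝ => u 4) (pr 4) s := (pr 4).hasFDerivAt
  have hD : HasFDerivAt (fun u : Fin 5 → ℝ => 1 - u 2 * u 3)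
      ((0 : (Fin 5 → ℝ) →L[ℝ] ℝ) - (s 2 • pr 3 + s 3 • pr 2)) s :=
    (hasFDerivAt_const 1 s).sub (p2.mul p3)
  have hInv := (hasDerivAt_inv h).comp_hasFDerivAt s hD
  have hF := ((p3.const_mul (-2)).mul (p4.mul p4)).mul hInv
  have hF' : HasFDerivAt (Fsys 1) _ s :=
    hF.congr_of_eventuallyEq (Filter.Eventually.of_forall (fun u => by
      show -2 * u 3 * u 4 ^ 2 / (1 - u 2 * u 3) = _
      simp only [Pi.mul_apply, Function.comp_apply]; rw [div_eq_mul_inv]; ring))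
  rw [hF'.fderiv]
  simp only [ContinuousLinearMap.add_apply, ContinuousLinearMap.smul_apply,
    ContinuousLinearMap.sub_apply, ContinuousLinearMap.zero_apply, pr,
    ContinuousLinearMap.proj_apply, smul_eq_mul, Function.comp_apply, Pi.mul_apply]
  field_simp
  ring

lemma fdgp (s : Fin 5 → ℝ) (h : 1 - s 2 * s 3 ≠ 0) (v : Fin 5 → ℝ) :
    fderiv ℝ (fun u : Fin 5 → ℝ => -2 * u 4 ^ 2 / (1 - u 2 * u 3) ^ 2) s v =
      (-4 * s 3 * (s 4)^2 * v 2 - 4 * s 2 * (s 4)^2 * v 3) / (1 - s 2 * s 3)^3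
        + (-4 * s 4 * v 4) / (1 - s 2 * s 3)^2 := by
  have p2 : HasFDerivAt (fun u : Fin 5 → ℝ => u 2) (pr 2) s := (pr 2).hasFDerivAt
  have p3 : HasFDerivAt (fun u : Fin 5 → ℝ => u 3) (pr 3) s := (pr 3).hasFDerivAt
  have p4 : HasFDerivAt (fun u : Fin 5 → ℝ => u 4) (pr 4) s := (pr 4).hasFDerivAt
  have hD : HasFDerivAt (fun u : Fin 5 → ℝ => 1 - u 2 * u 3)
      ((0 : (Fin 5 → ℝ) →L[ℝ] ℝ) - (s 2 • pr 3 + s 3 • pr 2)) s :=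
    (hasFDerivAt_const 1 s).sub (p2.mul p3)
  have hD2 := hD.mul hD
  have h2 : (1 - s 2 * s 3) * (1 - s 2 * s 3) ≠ 0 := mul_ne_zero h h
  have hInv := (hasDerivAt_inv h2).comp_hasFDerivAt s hD2
  have hF := ((p4.mul p4).const_mul (-2)).mul hInv
  have hF' : HasFDerivAt (fun u : Fin 5 → ℝ => -2 * u 4 ^ 2 / (1 - u 2 * u 3) ^ 2) _ s :=
    hF.congr_of_eventuallyEq (Filter.Eventually.of_forall (fun u => by
      simp only [Pi.mul_apply, Function.comp_apply]; rw [div_eq_mul_inv]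
      rw [show ((1 - u 2 * u 3) ^ 2)⁻¹ = ((1 - u 2 * u 3) * (1 - u 2 * u 3))⁻¹ by rw [pow_two]]
      ring))
  rw [hF'.fderiv]
  simp only [ContinuousLinearMap.add_apply, ContinuousLinearMap.smul_apply,
    ContinuousLinearMap.sub_apply, ContinuousLinearMap.zero_apply, pr,
    ContinuousLinearMap.proj_apply, smul_eq_mul, Function.comp_apply, Pi.mul_apply]
  field_simp
  ring

lemma fdgq (s : Fin 5 → ℝ) (h : 1 - s 2 * s 3 ≠ 0) (v : Fin 5 → ℝ) :
    fderiv ℝ (fun u : Fin 5 → ℝ => -4 * u 3 * u 4 / (1 - u 2 * u 3)) s v =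
      (-4 * (s 3)^2 * s 4 * v 2 - 4 * s 4 * v 3) / (1 - s 2 * s 3)^2
        + (-4 * s 3 * v 4) / (1 - s 2 * s 3) := by
  have p2 : HasFDerivAt (fun u : Fin 5 → ℝ => u 2) (pr 2) s := (pr 2).hasFDerivAt
  have p3 : HasFDerivAt (fun u : Fin 5 → ℝ => u 3) (pr 3) s := (pr 3).hasFDerivAt
  have p4 : HasFDerivAt (fun u : Fin 5 → ℝ => u 4) (pr 4) s := (pr 4).hasFDerivAt
  have hD : HasFDerivAt (fun u : Fin 5 → ℝ => 1 - u 2 * u 3)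
      ((0 : (Fin 5 → ℝ) →L[ℝ] ℝ) - (s 2 • pr 3 + s 3 • pr 2)) s :=
    (hasFDerivAt_const 1 s).sub (p2.mul p3)
  have hInv := (hasDerivAt_inv h).comp_hasFDerivAt s hD
  have hF := ((p3.const_mul (-4)).mul p4).mul hInv
  have hF' : HasFDerivAt (fun u : Fin 5 → ℝ => -4 * u 3 * u 4 / (1 - u 2 * u 3)) _ s :=
    hF.congr_of_eventuallyEq (Filter.Eventually.of_forall (fun u => by
      simp only [Pi.mul_apply, Function.comp_apply]; rw [div_eq_mul_inv]))
  rw [hF'.fderiv]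
  simp only [ContinuousLinearMap.add_apply, ContinuousLinearMap.smul_apply,
    ContinuousLinearMap.sub_apply, ContinuousLinearMap.zero_apply, pr,
    ContinuousLinearMap.proj_apply, smul_eq_mul, Function.comp_apply, Pi.mul_apply]
  field_simp
  ring

lemma hev (s : Fin 5 → ℝ) (h : 1 - s 2 * s 3 ≠ 0) :
    ∀ᶠ u in nhds s, 1 - u 2 * u 3 ≠ 0 := by
  have hc : ContinuousAt (fun u : Fin 5 → ℝ => 1 - u 2 * u 3) s := by fun_prop
  exact hc.eventually_ne h

lemma X3 (s : Fin 5 → ℝ) (h : 1 - s 2 * s 3 ≠ 0) :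
    Xtot (fun u => fderiv ℝ (Fsys 1) u (Pi.single (3 : Fin 5) 1)) s =
      4 * s 3 * (s 4)^3 / (1 - s 2 * s 3)^3 := by
  have heq : (fun u => fderiv ℝ (Fsys 1) u (Pi.single (3 : Fin 5) 1))
      =ᶠ[nhds s] (fun u : Fin 5 → ℝ => -2 * u 4 ^ 2 / (1 - u 2 * u 3) ^ 2) := by
    filter_upwards [hev s h] with u hu
    rw [fdF2 u hu]
    simp [Pi.single_apply]
  unfold Xtot
  rw [heq.fderiv_eq, fdgp s h]
  have e2 : (![1, s 3, s 4, 0, Fsys 1 s] : Fin 5 → ℝ) 2 = s 4 := rfl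
  have e3 : (![1, s 3, s 4, 0, Fsys 1 s] : Fin 5 → ℝ) 3 = 0 := rfl
  have e4 : (![1, s 3, s 4, 0, Fsys 1 s] : Fin 5 → ℝ) 4 = Fsys 1 s := rfl
  rw [e2, e3, e4, show Fsys 1 s = -2 * s 3 * (s 4) ^ 2 / (1 - s 2 * s 3) from rfl]
  field_simp
  ring

lemma X4 (s : Fin 5 → ℝ) (h : 1 - s 2 * s 3 ≠ 0) :
    Xtot (fun u => fderiv ℝ (Fsys 1) u (Pi.single (4 : Fin 5) 1)) s =
      4 * (s 3)^2 * (s 4)^2 / (1 - s 2 * s 3)^2 := by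
  have heq : (fun u => fderiv ℝ (Fsys 1) u (Pi.single (4 : Fin 5) 1))
      =ᶠ[nhds s] (fun u : Fin 5 → ℝ => -4 * u 3 * u 4 / (1 - u 2 * u 3)) := by
    filter_upwards [hev s h] with u hu
    rw [fdF2 u hu]
    simp [Pi.single_apply]
  unfold Xtot
  rw [heq.fderiv_eq, fdgq s h]
  have e2 : (![1, s 3, s 4, 0, Fsys 1 s] : Fin 5 → ℝ) 2 = s 4 := rfl
  have e3 : (![1, s 3, s 4, 0, Fsys 1 s] : Fin 5 → ℝ) 3 = 0 := rfl
  have e4 : (![1, s 3, s 4, 0, Fsys 1 s] : Fin 5 → ℝ) 4 = Fsys 1 s := rfl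
  rw [e2, e3, e4, show Fsys 1 s = -2 * s 3 * (s 4) ^ 2 / (1 - s 2 * s 3) from rfl]
  field_simp
  ring

lemma Fmat_0 (s : Fin 5 → ℝ) (j : Fin 2) : Fmat 0 j s = 0 := by
  have hzero : (fun u => fderiv ℝ (Fsys 0) u (Pi.single (eP j) 1))
      = fun _ : Fin 5 → ℝ => (0:ℝ) := funext fun u => fdF0 u _
  unfold Fmat
  rw [hzero]
  unfold Xtot
  rw [fderiv_fun_const]
  simp [fdF0]

lemma Fmat_10 (s : Fin 5 → ℝ) (h : 1 - s 2 * s 3 ≠ 0) : Fmat 1 0 s = 0 := by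
  have hY : eY 0 = (1 : Fin 5) := rfl
  have hP0 : eP 0 = (3 : Fin 5) := rfl
  have hP1 : eP 1 = (4 : Fin 5) := rfl
  unfold Fmat
  rw [Fin.sum_univ_two, hY, hP0, hP1, X3 s h, fdF2 s h, fdF2 s h, fdF2 s h, fdF0]
  simp [Pi.single_apply]
  field_simp
  ring

lemma Fmat_11 (s : Fin 5 → ℝ) (h : 1 - s 2 * s 3 ≠ 0) : Fmat 1 1 s = 0 := by
  have hY : eY 1 = (2 : Fin 5) := rfl
  have hP0 : eP 0 = (3 : Fin 5) := rfl
  have hP1 : eP 1 = (4 : Fin 5) := rfl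
  unfold Fmat
  rw [Fin.sum_univ_two, hY, hP0, hP1, X4 s h, fdF2 s h, fdF2 s h, fdF2 s h, fdF0]
  simp [Pi.single_apply]
  field_simp
  ring

lemma Fmat_zero (s : Fin 5 → ℝ) (h : 1 - s 2 * s 3 ≠ 0) (i j : Fin 2) :
    Fmat i j s = 0 := by
  fin_cases i <;> fin_cases j
  · exact Fmat_0 s 0
  · exact Fmat_0 s 1
  · exact Fmat_10 s h
  · exact Fmat_11 s h

/-- For the system describing chains (Lewy curves) of the flat para-CR 3-manifold,
`F^i_j = 0` on the open set `1 − y²p¹ ≠ 0`; in particular the Fels torsion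
`T^i_j = F^i_j − (1/2)δ^i_j F^k_k` vanishes. -/
theorem stmt7 : ∀ s : Fin 5 → ℝ, 1 - s 2 * s 3 ≠ 0 →
    (∀ i j : Fin 2, Fmat i j s = 0) ∧
    (∀ i j : Fin 2, Fmat i j s
      - (1 / 2) * (if i = j then (1:ℝ) else 0) * ∑ k : Fin 2, Fmat k k s = 0) := by
  intro s h
  refine ⟨Fmat_zero s h, fun i j => ?_⟩
  simp [Fmat_zero s h]
end

section
/- Fix real constants Z ≠ 0 and T. Let t(z) = Az + B be affine (A, B ∈ ℝ, A ≠ 0), and suppose a : I → ℝ is a differentiable function satisfying the implicit relation a(z) = Z·(z − a(z)·t(z)) + T on an interval I on which 1 + Z·t(z) ≠ 0. Then a is twice differentiable, a'(z) = Z(1 − a(z)A)/(1 + Z t(z)), and a satisfies the second-order ODE (1 − a(z) t'(z)) a''(z) = −2 (a'(z) t'(z)) a'(z), i.e., a'' = −2Aa'·a'/(1 − Aa) wherever 1 − A a(z) ≠ 0. -/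
/-- The `n = 1` derivation of the Lewy-curve ODE for the flat para-CR structure:
if `t z = A z + B` is affine (`A ≠ 0`) and `a` is differentiable on an open set `I`
satisfying `a = Z (z − a t) + T₀` with `1 + Z t ≠ 0` on `I` (`Z ≠ 0`), then `a` is
twice differentiable on `I`, `a' = Z(1 − a A)/(1 + Z t)`, and
`a'' = −2 A a' a'/(1 − A a)` wherever `1 − A a ≠ 0`. -/
theorem stmt15 (Z T₀ A B : ℝ) (hZ : Z ≠ 0) (hA : A ≠ 0)
    (I : Set ℝ) (hI : IsOpen I) (a : ℝ → ℝ)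
    (ha : ∀ z ∈ I, DifferentiableAt ℝ a z)
    (hrel : ∀ z ∈ I, a z = Z * (z - a z * (A * z + B)) + T₀)
    (hden : ∀ z ∈ I, 1 + Z * (A * z + B) ≠ 0) :
    ∀ z ∈ I,
      DifferentiableAt ℝ a z ∧ DifferentiableAt ℝ (deriv a) z ∧
      deriv a z = Z * (1 - a z * A) / (1 + Z * (A * z + B)) ∧
      (1 - A * a z ≠ 0 →
        deriv (deriv a) z = -2 * A * deriv a z * deriv a z / (1 - A * a z)) := by
  -- explicit formula for `a` on `I`
  have key : ∀ x ∈ I, a x = (Z * x + T₀) / (1 + Z * (A * x + B)) := by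
    intro x hx
    have h1 := hrel x hx
    have h2 := hden x hx
    rw [eq_div_iff h2]
    linear_combination h1
  set C : ℝ := Z + Z * Z * B - Z * A * T₀ with hC
  -- derivative of the denominator
  have hdenD : ∀ x : ℝ, HasDerivAt (fun y => 1 + Z * (A * y + B)) (Z * A) x := by
    intro x
    have h : HasDerivAt (fun y => A * y + B) A x := by
      simpa using ((hasDerivAt_id x).const_mul A).add_const B
    simpa [mul_comm, mul_assoc] using (h.const_mul Z).const_add 1
  -- derivative of `a` at each point of `I`
  have hda : ∀ x ∈ I, HasDerivAt a (C / (1 + Z * (A * x + B)) ^ 2) x := by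
    intro x hx
    have hdx := hden x hx
    have hnum : HasDerivAt (fun y => Z * y + T₀) Z x := by
      simpa using ((hasDerivAt_id x).const_mul Z).add_const T₀
    have hgd := hnum.div (hdenD x) hdx
    have heq : a =ᶠ[nhds x] fun y => (Z * y + T₀) / (1 + Z * (A * y + B)) :=
      Filter.eventuallyEq_of_mem (hI.mem_nhds hx) (fun y hy => key y hy)
    have h := hgd.congr_of_eventuallyEq heq
    refine h.congr_deriv ?_
    rw [div_eq_div_iff (pow_ne_zero 2 hdx) (pow_ne_zero 2 hdx), hC]
    ring
  have hderiv : ∀ x ∈ I, deriv a x = C / (1 + Z * (A * x + B)) ^ 2 :=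
    fun x hx => (hda x hx).deriv
  intro z hz
  have hdz := hden z hz
  have hq2 : ((1 + Z * (A * z + B)) ^ 2) ≠ 0 := pow_ne_zero 2 hdz
  -- eventual equality of `deriv a` with explicit formula
  have hev : deriv a =ᶠ[nhds z] fun x => C / (1 + Z * (A * x + B)) ^ 2 :=
    Filter.eventuallyEq_of_mem (hI.mem_nhds hz) (fun y hy => hderiv y hy)
  -- derivative of the explicit formula
  have hq2d : HasDerivAt (fun y => (1 + Z * (A * y + B)) ^ 2)
      (2 * (1 + Z * (A * z + B)) * (Z * A)) z := by
    simpa [mul_comm, mul_assoc] using (hdenD z).fun_pow 2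
  have hg2 : HasDerivAt (fun x => C / (1 + Z * (A * x + B)) ^ 2)
      ((0 * (1 + Z * (A * z + B)) ^ 2 - C * (2 * (1 + Z * (A * z + B)) * (Z * A))) /
        ((1 + Z * (A * z + B)) ^ 2) ^ 2) z :=
    (hasDerivAt_const z C).div hq2d hq2
  have hdd : HasDerivAt (deriv a)
      ((0 * (1 + Z * (A * z + B)) ^ 2 - C * (2 * (1 + Z * (A * z + B)) * (Z * A))) /
        ((1 + Z * (A * z + B)) ^ 2) ^ 2) z :=
    hg2.congr_of_eventuallyEq hev
  refine ⟨ha z hz, hdd.differentiableAt, ?_, ?_⟩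
  · rw [hderiv z hz, key z hz]
    field_simp [hC]
    ring
  · intro hne
    have h1 : 1 - A * a z = C / (Z * (1 + Z * (A * z + B))) := by
      rw [key z hz]
      field_simp [hC]
      ring
    have hCne : C ≠ 0 := by
      intro h0
      apply hne
      rw [h1, h0, zero_div]
    rw [hdd.deriv, hderiv z hz, h1]
    field_simp
    ring
end
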